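/- The set of h₀ ∈ H with P h₀ = 0 for which the partial sums ∑_{i=0}^{k} (P∘R∘P∘R)^i h₀ of the scattering control Neumann series converge in H as k → ∞ is dense in the kernel of P (the orthogonal complement of the range of P). -/

import Mathlib

open Filter

open ContinuousLinearMap in
/-- Even powers of a self-adjoint contraction converge strongly. -/
private lemma aux_pow_conv {H : Type*} [NormedAddCommGroup H] [InnerProductSpace ℂ H]
    [CompleteSpace H] (B : H →L[ℂ] H) (hB : IsSelfAdjoint B)
    (hBle : ∀ x : H, ‖B x‖ ≤ ‖x‖) (x : H) :
    ∃ l : H, Tendsto (fun n : ℕ => ((B ^ (2 * n)) x)) atTop (nhds l) := by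
  have hBin : ∀ u v : H, (inner ℂ (B u) v : ℂ) = inner ℂ u (B v) := by
    intro u v
    conv_lhs => rw [← hB.adjoint_eq]
    exact ContinuousLinearMap.adjoint_inner_left B v u
  set a : ℕ → ℝ := fun n => ‖(B ^ n) x‖ ^ 2 with ha
  have hpow : ∀ n : ℕ, (B ^ (n + 1)) x = B ((B ^ n) x) := by
    intro n
    rw [pow_succ']
    rfl
  have hanti : Antitone a := by
    refine antitone_nat_of_succ_le (fun n => ?_)
    dsimp only [a]
    rw [hpow]
    exact pow_le_pow_left₀ (norm_nonneg _) (hBle _) 2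
  have h0 : ∀ n, (0:ℝ) ≤ a n := fun n => sq_nonneg _
  have hbdd : BddBelow (Set.range a) := ⟨0, by rintro y ⟨n, rfl⟩; exact h0 n⟩
  obtain ⟨L, hL⟩ : ∃ L, Tendsto a atTop (nhds L) := ⟨_, tendsto_atTop_ciInf hanti hbdd⟩
  have hge : ∀ n, L ≤ a n := hanti.le_of_tendsto hL
  -- inner ℂ product of powers
  have hinner : ∀ n m : ℕ, (inner ℂ ((B ^ n) x) ((B ^ m) x) : ℂ)
      = inner ℂ x ((B ^ (n + m)) x) := by
    intro n
    induction n with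
    | zero => intro m; simp
    | succ n ih =>
      intro m
      rw [hpow, hBin, ← hpow, ih (m + 1)]
      ring_nf
  have hre : ∀ n m : ℕ, RCLike.re (inner ℂ ((B ^ (2*n)) x) ((B ^ (2*m)) x) : ℂ) = a (n + m) := by
    intro n m
    have h1 : (inner ℂ ((B ^ (2*n)) x) ((B ^ (2*m)) x) : ℂ)
        = inner ℂ ((B ^ (n+m)) x) ((B ^ (n+m)) x) := by
      rw [hinner, hinner]
      ring_nf
    rw [h1]
    exact inner_self_eq_norm_sq _
  have hnorm : ∀ n m : ℕ, ‖(B ^ (2*n)) x - (B ^ (2*m)) x‖ ^ 2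
      = a (2*n) - 2 * a (n+m) + a (2*m) := by
    intro n m
    rw [norm_sub_sq (𝕜 := ℂ), hre]
  -- Cauchy
  have hcauchy : CauchySeq (fun n : ℕ => (B ^ (2 * n)) x) := by
    rw [Metric.cauchySeq_iff']
    intro ε hε
    have hδ : (0:ℝ) < ε ^ 2 / 2 := by positivity
    have hev : ∀ᶠ k in atTop, a k < L + ε ^ 2 / 2 :=
      hL.eventually_lt_const (by linarith)
    obtain ⟨N, hN⟩ := eventually_atTop.mp hev
    refine ⟨N, fun n hn => ?_⟩
    have h2n : N ≤ 2 * n := le_trans hn (by omega)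
    have h2N : N ≤ 2 * N := by omega
    have hnN : N ≤ n + N := by omega
    have hsq : ‖(B ^ (2*n)) x - (B ^ (2*N)) x‖ ^ 2 < ε ^ 2 := by
      rw [hnorm]
      have h1 := hN _ h2n
      have h2 := hN _ h2N
      have h3 := hge (n + N)
      linarith
    rw [dist_eq_norm]
    nlinarith [norm_nonneg ((B ^ (2*n)) x - (B ^ (2*N)) x)]
  exact cauchySeq_tendsto_of_complete hcauchy

/-- The set of `h₀ ∈ H` with `P h₀ = 0` for which the partial sums
`∑_{i=0}^{k} (P∘R∘P∘R)^i h₀` of the scattering control Neumann series converge in `H`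
is dense in the kernel of `P`. -/
theorem stmt13 {H : Type*} [NormedAddCommGroup H] [InnerProductSpace ℂ H] [CompleteSpace H]
    (R P : H →L[ℂ] H)
    (hR : IsSelfAdjoint R) (hR2 : R ∘L R = 1)
    (hP : IsSelfAdjoint P) (hP2 : P ∘L P = P) :
    ∀ h : H, P h = 0 →
      h ∈ closure {h₀ : H | P h₀ = 0 ∧
        ∃ l : H,
          Tendsto (fun k : ℕ => ∑ i ∈ Finset.range (k + 1), ((P ∘L R ∘L P ∘L R) ^ i) h₀)
            atTop (nhds l)} := by
  intro h hh
  set S : H →L[ℂ] H := P ∘L R ∘L P ∘L R with hSdef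
  set B : H →L[ℂ] H := P ∘L R ∘L P with hBdef
  have hPP : ∀ y, P (P y) = P y := fun y => ContinuousLinearMap.ext_iff.mp hP2 y
  have hRR : ∀ y, R (R y) = y := fun y => ContinuousLinearMap.ext_iff.mp hR2 y
  have hPin : ∀ u v : H, (inner ℂ (P u) v : ℂ) = inner ℂ u (P v) := by
    intro u v
    conv_lhs => rw [← hP.adjoint_eq]
    exact ContinuousLinearMap.adjoint_inner_left P v u
  have hBsa : IsSelfAdjoint B := by
    rw [ContinuousLinearMap.isSelfAdjoint_iff']
    simp [hBdef, ContinuousLinearMap.adjoint_comp, hP.adjoint_eq, hR.adjoint_eq,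
      ContinuousLinearMap.comp_assoc]
  have hRin : ∀ u v : H, (inner ℂ (R u) v : ℂ) = inner ℂ u (R v) := by
    intro u v
    conv_lhs => rw [← hR.adjoint_eq]
    exact ContinuousLinearMap.adjoint_inner_left R v u
  have hRle : ∀ y : H, ‖R y‖ ≤ ‖y‖ := by
    intro y
    have h1 : (inner ℂ (R y) (R y) : ℂ) = inner ℂ y y := by
      rw [hRin, hRR]
    have h2 : ‖R y‖ ^ 2 = ‖y‖ ^ 2 := by
      rw [← inner_self_eq_norm_sq (𝕜 := ℂ), ← inner_self_eq_norm_sq (𝕜 := ℂ), h1]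
    nlinarith [norm_nonneg (R y), norm_nonneg y]
  have hPle : ∀ y : H, ‖P y‖ ≤ ‖y‖ := by
    intro y
    have h1 : (inner ℂ (P y) (P y) : ℂ) = inner ℂ y (P y) := by rw [hPin, hPP]
    have h2 : ‖P y‖ ^ 2 = RCLike.re (inner ℂ y (P y) : ℂ) := by
      rw [← inner_self_eq_norm_sq (𝕜 := ℂ), h1]
    have h3 : RCLike.re (inner ℂ y (P y) : ℂ) ≤ ‖y‖ * ‖P y‖ := by
      refine le_trans (RCLike.re_le_norm _) ?_
      exact norm_inner_le_norm _ _
    nlinarith [norm_nonneg (P y), norm_nonneg y]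
  have hBle : ∀ y : H, ‖B y‖ ≤ ‖y‖ := by
    intro y
    calc ‖P (R (P y))‖ ≤ ‖R (P y)‖ := hPle _
    _ ≤ ‖P y‖ := hRle _
    _ ≤ ‖y‖ := hPle _
  -- pointwise descriptions
  have hSap : ∀ y, S y = P (R (P (R y))) := fun _ => rfl
  have hSP : ∀ y, P (S y) = S y := fun y => hPP _
  have hSpow : ∀ (n : ℕ) (y : H), (S ^ (n + 1)) y = (S ^ n) (S y) := by
    intro n y
    rw [pow_succ]
    rfl
  have hBpow : ∀ (n : ℕ) (y : H), (B ^ (n + 1)) y = B ((B ^ n) y) := by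
    intro n y
    rw [pow_succ']
    rfl
  have hSS : ∀ y, S (S y) = (B ^ 2) (S y) := by
    intro y
    have : (B ^ 2) (S y) = B (B (S y)) := by rw [sq]; rfl
    rw [this]
    show P (R (P (R (S y)))) = P (R (P (P (R (P (S y))))))
    rw [hPP, hSP]
  have hpowS : ∀ (k : ℕ) (y : H), (S ^ (k + 1)) y = (B ^ (2 * k)) (S y) := by
    intro k
    induction k with
    | zero => intro y; simp [hSpow]
    | succ k ih =>
      intro y
      have h1 : (S ^ (k + 2)) y = (S ^ (k + 1)) (S y) := by
        rw [pow_succ]; rfl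
      rw [h1, ih (S y), hSS]
      have h2 : (B ^ (2 * k)) ((B ^ 2) (S y)) = (B ^ (2 * k + 2)) (S y) := by
        rw [pow_add]; rfl
      rw [h2]
      norm_num [Nat.mul_succ]
  -- the operator T and the good subspace
  set T : H →L[ℂ] H := R ∘L P ∘L R - S with hTdef
  have hTap : ∀ q, T q = R (P (R q)) - S q := fun _ => rfl
  have hPT : ∀ q, P (T q) = 0 := by
    intro q
    rw [hTap, map_sub, hSP, hSap]
    abel
  have hST : ∀ q, S (T q) = S q - S (S q) := by
    intro q
    rw [hTap, map_sub]
    congr 1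
    show P (R (P (R (R (P (R q)))))) = S q
    rw [hRR, hPP, hSap]
  set K1 : Submodule ℂ H := LinearMap.ker (P : H →ₗ[ℂ] H) ⊓ LinearMap.ker ((P ∘L R : H →L[ℂ] H) : H →ₗ[ℂ] H) with hK1def
  set W : Submodule ℂ H := LinearMap.range (T : H →ₗ[ℂ] H) ⊔ K1 with hWdef
  -- every element of W is in the good set
  have hWsub : (W : Set H) ⊆ {h₀ : H | P h₀ = 0 ∧
      ∃ l : H,
        Tendsto (fun k : ℕ => ∑ i ∈ Finset.range (k + 1), ((P ∘L R ∘L P ∘L R) ^ i) h₀)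
          atTop (nhds l)} := by
    intro w hw
    obtain ⟨y, hy, z, hz, rfl⟩ := Submodule.mem_sup.mp hw
    obtain ⟨q, rfl⟩ := LinearMap.mem_range.mp hy
    obtain ⟨hz1, hz2⟩ := Submodule.mem_inf.mp hz
    rw [LinearMap.mem_ker] at hz1 hz2
    simp only [ContinuousLinearMap.coe_coe] at hz1 ⊢
    have hz2' : P (R z) = 0 := hz2
    have hSz : S z = 0 := by rw [hSap, hz2', map_zero, map_zero]
    constructor
    · rw [map_add, hPT, hz1, add_zero]
    · -- partial sums
      have hsum : ∀ k : ℕ, ∑ i ∈ Finset.range (k + 1), (S ^ i) (T q + z)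
          = (T q + z) + (S q - (S ^ (k + 1)) q) := by
        intro k
        induction k with
        | zero => simp
        | succ k ih =>
          rw [Finset.sum_range_succ, ih]
          have h1 : (S ^ (k + 1)) (T q + z) = (S ^ (k + 1)) q - (S ^ (k + 2)) q := by
            have e1 : (S ^ (k + 1)) z = 0 := by rw [hSpow, hSz, map_zero]
            have e2 : (S ^ (k + 1)) (T q) = (S ^ k) (S q) - (S ^ k) (S (S q)) := by
              rw [hSpow, hST, map_sub]
            have e3 : (S ^ k) (S q) = (S ^ (k + 1)) q := (hSpow k q).symm
            have e4 : (S ^ k) (S (S q)) = (S ^ (k + 2)) q :=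
              ((hSpow (k + 1) q).trans (hSpow k (S q))).symm
            rw [map_add, e1, add_zero, e2, e3, e4]
          rw [h1]
          abel
      obtain ⟨l, hl⟩ := aux_pow_conv B hBsa hBle (S q)
      refine ⟨(T q + z) + (S q - l), ?_⟩
      have htend : Tendsto (fun k : ℕ => (T q + z) + (S q - (B ^ (2 * k)) (S q)))
          atTop (nhds ((T q + z) + (S q - l))) :=
        tendsto_const_nhds.add (tendsto_const_nhds.sub hl)
      refine htend.congr (fun k => ?_)
      rw [hsum k, hpowS]
  -- density: h is in the closure of W
  have hcl : h ∈ W.topologicalClosure := by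
    rw [← Submodule.orthogonal_orthogonal_eq_closure]
    intro u hu
    rw [Submodule.mem_orthogonal] at hu
    set w : H := u - P u with hwdef
    have hw1 : P w = 0 := by rw [hwdef, map_sub, hPP, sub_self]
    -- adjoint of T applied to u
    have hTadj : ContinuousLinearMap.adjoint T u = R (P (R w)) := by
      have h1 : ContinuousLinearMap.adjoint T = (R ∘L P ∘L R) - (R ∘L P ∘L R ∘L P) := by
        rw [hTdef, map_sub]
        congr 1
        · simp [ContinuousLinearMap.adjoint_comp, hP.adjoint_eq, hR.adjoint_eq,
            ContinuousLinearMap.comp_assoc]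
        · rw [hSdef]
          simp [ContinuousLinearMap.adjoint_comp, hP.adjoint_eq, hR.adjoint_eq,
            ContinuousLinearMap.comp_assoc]
      rw [h1]
      show R (P (R u)) - R (P (R (P u))) = R (P (R (u - P u)))
      rw [map_sub, map_sub, map_sub]
    have hTu : ContinuousLinearMap.adjoint T u = 0 := by
      have h1 : (inner ℂ (T (ContinuousLinearMap.adjoint T u)) u : ℂ) = 0 := by
        refine hu _ ?_
        exact Submodule.mem_sup_left (LinearMap.mem_range_self _ _)
      rw [← ContinuousLinearMap.adjoint_inner_right] at h1
      exact inner_self_eq_zero.mp h1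
    have hw2 : P (R w) = 0 := by
      have h1 : R (P (R w)) = 0 := by rw [← hTadj, hTu]
      have h2 := congrArg R h1
      rwa [hRR, map_zero] at h2
    have hwK : w ∈ W := by
      refine Submodule.mem_sup_right (Submodule.mem_inf.mpr ⟨?_, ?_⟩)
      · exact LinearMap.mem_ker.mpr hw1
      · exact LinearMap.mem_ker.mpr hw2
    have hwu : (inner ℂ w u : ℂ) = 0 := hu w hwK
    have hww : (inner ℂ w w : ℂ) = 0 := by
      have h1 : (inner ℂ w u : ℂ) = inner ℂ w w + inner ℂ w (P u) := by
        rw [← inner_add_right]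
        congr 1
        rw [hwdef]
        abel
      have h2 : (inner ℂ w (P u) : ℂ) = 0 := by
        rw [← hPin, hw1, inner_zero_left]
      rw [h1, h2, add_zero] at hwu
      exact hwu
    have hwz : w = 0 := inner_self_eq_zero.mp hww
    have hu' : u = P u := by
      have := hwz
      rw [hwdef] at this
      linear_combination (norm := abel) this
    rw [hu']
    rw [hPin, hh, inner_zero_right]
  have : (W.topologicalClosure : Set H) ⊆ closure {h₀ : H | P h₀ = 0 ∧
      ∃ l : H,
        Tendsto (fun k : ℕ => ∑ i ∈ Finset.range (k + 1), ((P ∘L R ∘L P ∘L R) ^ i) h₀)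
          atTop (nhds l)} := by
    rw [Submodule.topologicalClosure_coe]
    exact closure_mono hWsub
  exact this hcl
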